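/- arXiv:2301.07268 — 5 statements merged into one kernel-verified Lean document; each statement's English description precedes it below -/
import Mathlib

section
/- In SL₃ (or any group with Chevalley generators of type A₂), the relation z_i(t₁)·z_j(t₂)·z_i(t₃) = z_j(t₃)·z_i(t₁t₃ − t₂)·z_j(t₁) holds, where z_k(t) = x_k(t)·ṡ_k. -/
/-- The one-parameter unipotent subgroup for the first simple root of `SL₃`. -/
def sl3x₁ {F : Type*} [Field F] (t : F) : Matrix (Fin 3) (Fin 3) F :=
  !![1, t, 0; 0, 1, 0; 0, 0, 1]

/-- The one-parameter unipotent subgroup for the second simple root of `SL₃`. -/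
def sl3x₂ {F : Type*} [Field F] (t : F) : Matrix (Fin 3) (Fin 3) F :=
  !![1, 0, 0; 0, 1, t; 0, 0, 1]

/-- The standard lift of the first simple reflection of `SL₃`. -/
def sl3s₁ {F : Type*} [Field F] : Matrix (Fin 3) (Fin 3) F :=
  !![0, -1, 0; 1, 0, 0; 0, 0, 1]

/-- The standard lift of the second simple reflection of `SL₃`. -/
def sl3s₂ {F : Type*} [Field F] : Matrix (Fin 3) (Fin 3) F :=
  !![1, 0, 0; 0, 0, -1; 0, 1, 0]

/-- `z_k(t) := x_k(t) · ṡ_k`. -/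
def sl3z₁ {F : Type*} [Field F] (t : F) : Matrix (Fin 3) (Fin 3) F := sl3x₁ t * sl3s₁

def sl3z₂ {F : Type*} [Field F] (t : F) : Matrix (Fin 3) (Fin 3) F := sl3x₂ t * sl3s₂

/-- The braid-type relation `z_i(t₁) z_j(t₂) z_i(t₃) = z_j(t₃) z_i(t₁t₃ − t₂) z_j(t₁)`
in `SL₃`, where `z_k(t) = x_k(t)·ṡ_k`. -/
theorem sl3_z_braid_relation {F : Type*} [Field F] (t₁ t₂ t₃ : F) :
    sl3z₁ t₁ * sl3z₂ t₂ * sl3z₁ t₃ = sl3z₂ t₃ * sl3z₁ (t₁ * t₃ - t₂) * sl3z₂ t₁ := by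
  simp only [sl3z₁, sl3z₂, sl3x₁, sl3x₂, sl3s₁, sl3s₂]
  ext i j
  fin_cases i <;> fin_cases j <;> simp [Matrix.mul_apply, Fin.sum_univ_succ] <;> ring
end

section
/- Let W be a Weyl group and β = i₁…i_m a word in simple reflection indices with Demazure product equal to the longest element w∘. Then the positive distinguished subexpression (u₀,…,u_m) defined by u_m := w∘ and u_{c−1} := min(u_c, s_{i_c} u_c) is a w∘-subexpression: u₀ = id, u_m = w∘, and for each c either u_{c−1} = u_c or u_{c−1} = s_{i_c} u_c. -/
open CoxeterSystem List
open scoped Classical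

namespace PDS
variable {ι W : Type*} [Group W] {M : CoxeterMatrix ι} (cs : CoxeterSystem M W)

local prefix:100 "s" => cs.simple

noncomputable def sigma (i : ι) : Equiv.Perm (W × Bool) :=
  Function.Involutive.toPerm
    (fun p => (s i * p.1 * s i, Bool.xor (decide (p.1 = s i)) p.2))
    (by
      intro ⟨t, ε⟩
      have h1 : s i * (s i * t * s i) * s i = t := by
        rw [← mul_assoc, ← mul_assoc, cs.simple_mul_simple_self]
        rw [one_mul, mul_assoc, cs.simple_mul_simple_self, mul_one]
      have h2 : (s i * t * s i = s i) ↔ (t = s i) := by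
        constructor
        · intro h
          have := congrArg (fun x => s i * x * s i) h
          simpa [h1] using this
        · rintro rfl; simp [cs.simple_mul_simple_self]
      simp only [Prod.mk.injEq, h1, h2]
      refine ⟨trivial, ?_⟩
      rcases Bool.eq_false_or_eq_true (decide (t = s i)) with h | h <;>
        rcases Bool.eq_false_or_eq_true ε with h' | h' <;> simp [h, h'])

theorem sigma_apply (i : ι) (t : W) (ε : Bool) :
    sigma cs i (t, ε) = (s i * t * s i, Bool.xor (decide (t = s i)) ε) := rfl

private lemma decide_odd_add_toNat (b : Bool) (c : ℕ) :
    decide (Odd (c + b.toNat)) = Bool.xor b (decide (Odd c)) := by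
  cases b <;> by_cases h' : Odd c <;>
    simp [h', Nat.odd_add_one, Nat.not_odd_iff_even]

theorem sigma_pow_apply (i i' : ι) (k : ℕ) (t : W) (ε : Bool) :
    ((sigma cs i * sigma cs i') ^ k) (t, ε) =
      ((s i * s i')^k * t * ((s i * s i')^k)⁻¹,
        Bool.xor
          (decide (Odd ((List.range (2*k)).countP
            (fun r => decide (t = s i' * (s i * s i')^r)))))
          ε) := by
  set q := s i * s i' with hq
  have hconj : ∀ n : ℕ, s i' * q^n * s i' = (q^n)⁻¹ := by
    intro n
    have h0 : s i' * q * (s i')⁻¹ = q⁻¹ := by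
      simp [hq, mul_inv_rev, cs.inv_simple, mul_assoc, cs.simple_mul_simple_self,
        cs.simple_mul_simple_cancel_left]
    calc s i' * q^n * s i' = s i' * q^n * (s i')⁻¹ := by rw [cs.inv_simple]
    _ = (s i' * q * (s i')⁻¹)^n := by rw [conj_pow]
    _ = (q⁻¹)^n := by rw [h0]
    _ = (q^n)⁻¹ := inv_pow q n
  have hkey : ∀ n : ℕ, (q^n)⁻¹ * s i' = s i' * q^n := by
    intro n
    rw [← hconj n]
    simp [mul_assoc, cs.simple_mul_simple_self]
  induction k with
  | zero => simp
  | succ k ih =>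
    rw [pow_succ', Equiv.Perm.mul_apply, ih, Equiv.Perm.mul_apply, sigma_apply, sigma_apply]
    have hA : (q^k * t * (q^k)⁻¹ = s i') ↔ (t = s i' * q^(2*k)) := by
      have e1 : (q^k * t * (q^k)⁻¹ = s i') ↔ (t = (q^k)⁻¹ * s i' * q^k) := by
        constructor
        · intro h; rw [← h]; group
        · intro h; rw [h]; group
      rw [e1, hkey, mul_assoc, ← pow_add, two_mul]
    have hB : (s i' * (q^k * t * (q^k)⁻¹) * s i' = s i) ↔ (t = s i' * q^(2*k+1)) := by
      have e1 : (s i' * (q^k * t * (q^k)⁻¹) * s i' = s i)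
          ↔ (t = (q^k)⁻¹ * (s i' * s i * s i') * q^k) := by
        constructor
        · intro h
          have h2 := congrArg (fun x => (q^k)⁻¹ * (s i' * x * s i') * q^k) h
          rw [← h2]
          have h3 : s i' * (s i' * (q^k * t * (q^k)⁻¹) * s i') * s i'
              = q^k * t * (q^k)⁻¹ := by
            simp [mul_assoc, cs.simple_mul_simple_self, cs.simple_mul_simple_cancel_left]
          rw [h3]; group
        · intro h
          rw [h]
          have h4 : q^k * ((q^k)⁻¹ * (s i' * s i * s i') * q^k) * (q^k)⁻¹
              = s i' * s i * s i' := by group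
          rw [h4]
          simp [mul_assoc, cs.simple_mul_simple_self, cs.simple_mul_simple_cancel_left]
      have e2 : (q^k)⁻¹ * (s i' * s i * s i') * q^k = s i' * q^(2*k+1) := by
        have h3 : s i' * s i * s i' = q⁻¹ * s i' := by
          rw [hq, mul_inv_rev, cs.inv_simple, cs.inv_simple]
        rw [h3, ← mul_assoc, ← mul_inv_rev, ← pow_succ', hkey (k+1), mul_assoc, ← pow_add]
        congr 2
        omega
      rw [e1, e2]
    have hcount : (List.range (2*(k+1))).countP (fun r => decide (t = s i' * q^r))
        = (List.range (2*k)).countP (fun r => decide (t = s i' * q^r))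
          + (decide (t = s i' * q^(2*k))).toNat
          + (decide (t = s i' * q^(2*k+1))).toNat := by
      have h5 : 2*(k+1) = (2*k+1)+1 := by omega
      rw [h5, List.range_succ, List.range_succ, List.countP_append, List.countP_append]
      cases h1 : decide (t = s i' * q^(2*k)) <;>
        cases h2 : decide (t = s i' * q^(2*k+1)) <;>
        simp [List.countP_cons, h1, h2]
    rw [Prod.mk.injEq]
    refine ⟨?_, ?_⟩
    · rw [pow_succ' q k, mul_inv_rev, hq, mul_inv_rev, cs.inv_simple, cs.inv_simple]
      group
    · have e1 : (decide (q ^ k * t * (q ^ k)⁻¹ = s i'))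
          = (decide (t = s i' * q^(2*k))) := decide_eq_decide.mpr hA
      have e2 : (decide (s i' * (q ^ k * t * (q ^ k)⁻¹) * s i' = s i))
          = (decide (t = s i' * q^(2*k+1))) := decide_eq_decide.mpr hB
      rw [e1, e2, hcount, decide_odd_add_toNat, decide_odd_add_toNat]
      simp [Bool.xor_assoc]

local prefix:100 "π" => cs.wordProd
local prefix:100 "ℓ" => cs.length

theorem isLiftable : M.IsLiftable (sigma cs) := by
  intro i i'
  apply Equiv.ext
  intro ⟨t, ε⟩
  rw [Equiv.Perm.one_apply, sigma_pow_apply]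
  have hcnt : (List.range (2 * M i i')).countP
      (fun r => decide (t = s i' * (s i * s i')^r))
      = 2 * (List.range (M i i')).countP
          (fun r => decide (t = s i' * (s i * s i')^r)) := by
    rw [two_mul, List.range_add, List.countP_append, List.countP_map]
    have h2 : (List.range (M i i')).countP
        ((fun r => decide (t = s i' * (s i * s i')^r)) ∘ (M i i' + ·))
        = (List.range (M i i')).countP (fun r => decide (t = s i' * (s i * s i')^r)) := by
      apply List.countP_congr
      intro a _
      simp only [Function.comp_apply]
      have : (t = s i' * (s i * s i')^(M i i' + a)) ↔ (t = s i' * (s i * s i')^a) := by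
        rw [pow_add, cs.simple_mul_simple_pow i i', one_mul]
      rw [decide_eq_decide.mpr this]
    rw [h2, two_mul]
  rw [hcnt, cs.simple_mul_simple_pow i i']
  have hodd : ¬ Odd (2 * (List.range (M i i')).countP
      (fun r => decide (t = s i' * (s i * s i')^r))) := by
    simp [Nat.not_odd_iff_even, even_two_mul]
  simp [hodd]

/-- The parity representation. -/
noncomputable def phi : W →* Equiv.Perm (W × Bool) := cs.lift ⟨sigma cs, isLiftable cs⟩

theorem phi_simple (i : ι) : phi cs (s i) = sigma cs i := cs.lift_apply_simple _ i

/-- Word-level parity function (right inversion count parity). -/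
noncomputable def nOw : List ι → W → Bool
  | [], _ => false
  | i :: ω, t => Bool.xor (decide (π ω * t * (π ω)⁻¹ = s i)) (nOw ω t)

theorem phi_wordProd (ω : List ι) (t : W) (ε : Bool) :
    phi cs (π ω) (t, ε) = ((π ω) * t * (π ω)⁻¹, Bool.xor (nOw cs ω t) ε) := by
  induction ω with
  | nil => simp [cs.wordProd_nil, nOw]
  | cons i ω ih =>
    rw [cs.wordProd_cons, map_mul, Equiv.Perm.mul_apply, ih, phi_simple, sigma_apply]
    rw [Prod.mk.injEq]
    constructor
    · rw [mul_inv_rev, cs.inv_simple]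
      group
    · show _ = Bool.xor (nOw cs (i :: ω) t) ε
      rw [nOw, Bool.xor_assoc]

/-- Conjugation part of the parity representation. -/
noncomputable def nn (x t : W) : Bool := (phi cs x (t, false)).2

theorem phi_apply (x t : W) (ε : Bool) :
    phi cs x (t, ε) = (x * t * x⁻¹, Bool.xor (nn cs x t) ε) := by
  obtain ⟨ω, -, rfl⟩ := cs.exists_reduced_word x
  rw [phi_wordProd]
  unfold nn
  rw [phi_wordProd]
  simp

/-- Left-inversion parity function. -/
noncomputable def nL (x t : W) : Bool := nn cs x⁻¹ t

theorem nL_count (ω : List ι) (t : W) :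
    nL cs (π ω) t = decide (Odd ((cs.leftInvSeq ω).count t)) := by
  have hrev : nL cs (π ω) t = nOw cs ω.reverse t := by
    unfold nL nn
    rw [← cs.wordProd_reverse, phi_wordProd]
    simp
  have hcount : ∀ σ : List ι, nOw cs σ t = decide (Odd ((cs.rightInvSeq σ).count t)) := by
    intro σ
    induction σ with
    | nil => simp [nOw, rightInvSeq]
    | cons i σ ih =>
      have hris : cs.rightInvSeq (i :: σ) = ((π σ)⁻¹ * s i * π σ) :: cs.rightInvSeq σ := rfl
      rw [nOw, ih, hris, List.count_cons]
      simp only [beq_iff_eq]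
      have hiff : ((π σ)⁻¹ * s i * π σ = t) ↔ (π σ * t * (π σ)⁻¹ = s i) := by
        constructor
        · intro h; rw [← h]; group
        · intro h; rw [← h]; group
      have : (if (π σ)⁻¹ * s i * π σ = t then 1 else 0)
          = (decide (π σ * t * (π σ)⁻¹ = s i)).toNat := by
        by_cases h : π σ * t * (π σ)⁻¹ = s i <;> simp [h, hiff]
      rw [this, decide_odd_add_toNat]
  rw [hrev, hcount, cs.rightInvSeq_reverse, List.count_reverse]

theorem nL_mul (a b t : W) :
    nL cs (a * b) t = Bool.xor (nL cs b (a⁻¹ * t * a)) (nL cs a t) := by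
  unfold nL nn
  rw [mul_inv_rev, map_mul, Equiv.Perm.mul_apply]
  have h1 : phi cs a⁻¹ (t, false) = (a⁻¹ * t * a, nn cs a⁻¹ t) := by
    rw [phi_apply]
    simp
  rw [h1]
  have h2 : phi cs b⁻¹ (a⁻¹ * t * a, nn cs a⁻¹ t)
      = (b⁻¹ * (a⁻¹ * t * a) * b, Bool.xor (nn cs b⁻¹ (a⁻¹ * t * a)) (nn cs a⁻¹ t)) := by
    rw [phi_apply]
    simp
  rw [h2]
  rfl

theorem nL_one (t : W) : nL cs 1 t = false := by
  unfold nL nn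
  simp

theorem nL_simple (j : ι) (t : W) : nL cs (s j) t = decide (t = s j) := by
  have h1 : s j = π [j] := by rw [cs.wordProd_cons, cs.wordProd_nil, mul_one]
  rw [h1, nL_count]
  rw [cs.leftInvSeq_singleton]
  by_cases h : t = s j
  · subst h
    rw [← h1]
    simp [List.count_cons]
  · have : (s j) ≠ t := fun hh => h hh.symm
    rw [← h1]
    simp [List.count_cons, this, h]

theorem nL_simple_mul (j : ι) (w t : W) :
    nL cs (s j * w) t = Bool.xor (decide (t = s j)) (nL cs w (s j * t * s j)) := by
  rw [nL_mul, cs.inv_simple, nL_simple, Bool.xor_comm]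

theorem nL_inv (a t : W) : nL cs a⁻¹ t = nL cs a (a * t * a⁻¹) := by
  have h0 := nL_mul cs a a⁻¹ (a * t * a⁻¹)
  rw [mul_inv_cancel] at h0
  rw [nL_one] at h0
  have h1 : a⁻¹ * (a * t * a⁻¹) * a = t := by group
  rw [h1] at h0
  rcases Bool.eq_false_or_eq_true (nL cs a⁻¹ t) with h | h <;>
    rcases Bool.eq_false_or_eq_true (nL cs a (a * t * a⁻¹)) with h' | h' <;>
    rw [h, h'] at h0 ⊢ <;> simp_all

theorem mem_leftInvSeq_of_nL {ω : List ι} {t : W} (h : nL cs (π ω) t = true) :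
    t ∈ cs.leftInvSeq ω := by
  rw [nL_count] at h
  have hodd : Odd ((cs.leftInvSeq ω).count t) := of_decide_eq_true h
  have : (cs.leftInvSeq ω).count t ≠ 0 := by
    intro h0
    rw [h0] at hodd
    simp at hodd
  exact List.count_pos_iff.mp (Nat.pos_of_ne_zero this)

theorem nL_eq_false_of_not_reflection {x t : W} (h : ¬ cs.IsReflection t) :
    nL cs x t = false := by
  cases hb : nL cs x t
  · rfl
  · exfalso
    obtain ⟨ω, -, rfl⟩ := cs.exists_reduced_word x
    exact h (cs.isReflection_of_mem_leftInvSeq ω (mem_leftInvSeq_of_nL cs hb))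

theorem nL_simple_of_lt {x : W} {j : ι} (h : ℓ (s j * x) < ℓ x) :
    nL cs x (s j) = true := by
  obtain ⟨σ, hlen, hx⟩ := cs.exists_reduced_word (s j * x)
  have hxw : x = π (j :: σ) := by
    rw [cs.wordProd_cons, ← hx, cs.simple_mul_simple_cancel_left]
  rw [hxw, nL_count]
  have hlis : cs.leftInvSeq (j :: σ) = s j :: List.map (MulAut.conj (s j)) (cs.leftInvSeq σ) := rfl
  rw [hlis, List.count_cons_self]
  have hc0 : (List.map (MulAut.conj (s j)) (cs.leftInvSeq σ)).count (s j) = 0 := by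
    rw [List.count_eq_zero]
    intro hmem
    obtain ⟨u, hu, hequ⟩ := List.mem_map.mp hmem
    have hu2 : u = s j := by
      have h6 : s j * u * (s j)⁻¹ = s j := hequ
      calc u = (s j)⁻¹ * (s j * u * (s j)⁻¹) * s j := by group
      _ = (s j)⁻¹ * (s j) * s j := by rw [h6]
      _ = s j := by rw [inv_mul_cancel, one_mul]
    subst hu2
    have hred : cs.IsReduced σ := by
      unfold CoxeterSystem.IsReduced
      exact hlen
    have hinv := cs.isLeftInversion_of_mem_leftInvSeq hred hu
    rw [← hx] at hinv
    have := hinv.2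
    rw [cs.simple_mul_simple_cancel_left] at this
    omega
  rw [hc0]
  simp

theorem lt_of_nL_simple {x : W} {j : ι} (h : nL cs x (s j) = true) :
    ℓ (s j * x) < ℓ x := by
  obtain ⟨σ, hlen, hx⟩ := cs.exists_reduced_word x
  have hred : cs.IsReduced σ := by
    unfold CoxeterSystem.IsReduced
    exact hlen
  rw [hx] at h
  have hmem := mem_leftInvSeq_of_nL cs h
  have hinv := cs.isLeftInversion_of_mem_leftInvSeq hred hmem
  rw [← hx] at hinv
  exact hinv.2

theorem nL_refl_self {t : W} (ht : cs.IsReflection t) : nL cs t t = true := by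
  obtain ⟨w, i, rfl⟩ := ht
  have key := nL_mul cs w (s i * w⁻¹) (w * s i * w⁻¹)
  have e0 : w * (s i * w⁻¹) = w * s i * w⁻¹ := by rw [mul_assoc]
  rw [e0] at key
  have e1 : w⁻¹ * (w * s i * w⁻¹) * w = s i := by group
  rw [e1] at key
  have key2 := nL_mul cs (s i) w⁻¹ (s i)
  have e2 : (s i)⁻¹ * (s i) * (s i) = s i := by
    rw [inv_mul_cancel, one_mul]
  rw [e2] at key2
  rw [key2] at key
  rw [nL_simple] at key
  have e3 : nL cs w⁻¹ (s i) = nL cs w (w * s i * w⁻¹) := nL_inv cs w (s i)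
  rw [e3] at key
  rw [key]
  rcases Bool.eq_false_or_eq_true (nL cs w (w * s i * w⁻¹)) with h | h <;> simp [h]

theorem nL_of_isLeftInversion {x t : W} (ht : cs.IsReflection t) (h : ℓ (t * x) < ℓ x) :
    nL cs x t = true := by
  have h1 : nL cs (t * x) t = false := by
    cases hb : nL cs (t * x) t
    · rfl
    · exfalso
      obtain ⟨σ, hlen, hx⟩ := cs.exists_reduced_word (t * x)
      have hred : cs.IsReduced σ := by
        unfold CoxeterSystem.IsReduced
        exact hlen
      rw [hx] at hb
      have hinv := cs.isLeftInversion_of_mem_leftInvSeq hred (mem_leftInvSeq_of_nL cs hb)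
      rw [← hx] at hinv
      have h2 := hinv.2
      rw [← mul_assoc, ht.mul_self, one_mul] at h2
      omega
  have key := nL_mul cs t (t * x) t
  rw [← mul_assoc, ht.mul_self, one_mul] at key
  have e1 : t⁻¹ * t * t = t := by rw [inv_mul_cancel, one_mul]
  rw [e1, h1, nL_refl_self cs ht] at key
  rw [key]
  rfl

theorem eq_of_nL_eq : ∀ n : ℕ, ∀ x y : W, ℓ x = n → (∀ t, nL cs x t = nL cs y t) → x = y := by
  intro n
  induction n with
  | zero =>
    intro x y hx hxy
    have hx1 : x = 1 := cs.length_eq_zero_iff.mp hx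
    subst hx1
    by_contra hne
    obtain ⟨j, hj⟩ := cs.exists_leftDescent_of_ne_one (fun h => hne h.symm)
    have : nL cs y (s j) = true := nL_simple_of_lt cs hj
    rw [← hxy] at this
    rw [nL_one] at this
    exact Bool.false_ne_true this
  | succ n ih =>
    intro x y hx hxy
    have hxne : x ≠ 1 := by
      intro h
      rw [h, cs.length_one] at hx
      omega
    obtain ⟨j, hj⟩ := cs.exists_leftDescent_of_ne_one hxne
    have hyj : ℓ (s j * y) < ℓ y := by
      apply lt_of_nL_simple cs
      rw [← hxy]
      exact nL_simple_of_lt cs hj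
    have hrec : ∀ t, nL cs (s j * x) t = nL cs (s j * y) t := by
      intro t
      rw [nL_simple_mul, nL_simple_mul, hxy]
    have hlen : ℓ (s j * x) = n := by
      have h1 := cs.length_simple_mul x j
      have h2 : ℓ (s j * x) < ℓ x := hj
      omega
    have := ih (s j * x) (s j * y) hlen hrec
    calc x = s j * (s j * x) := by rw [cs.simple_mul_simple_cancel_left]
    _ = s j * (s j * y) := by rw [this]
    _ = y := by rw [cs.simple_mul_simple_cancel_left]

/-- Left exchange property. -/
theorem left_exchange {ω : List ι} (hred : cs.IsReduced ω) {j : ι}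
    (h : ℓ (s j * π ω) < ℓ (π ω)) :
    ∃ k, k < ω.length ∧ s j * π ω = π (ω.eraseIdx k) := by
  have hnL : nL cs (π ω) (s j) = true := nL_simple_of_lt cs h
  have hmem := mem_leftInvSeq_of_nL cs hnL
  obtain ⟨k, hk, hget⟩ := List.mem_iff_getElem.mp hmem
  rw [cs.length_leftInvSeq] at hk
  refine ⟨k, hk, ?_⟩
  have : (cs.leftInvSeq ω).getD k 1 = s j := by
    rw [List.getD_eq_getElem _ 1 (by rw [cs.length_leftInvSeq]; exact hk)]
    exact hget
  rw [← this]
  exact cs.getD_leftInvSeq_mul_wordProd ω k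

/-- Any element of maximal length is an involution. -/
theorem max_inv_eq {w₀ : W} (hmax : ∀ w : W, ℓ w ≤ ℓ w₀) : w₀⁻¹ = w₀ := by
  apply eq_of_nL_eq cs (ℓ w₀⁻¹) _ _ rfl
  intro t
  by_cases ht : cs.IsReflection t
  · have h1 : nL cs w₀⁻¹ t = true := by
      apply nL_of_isLeftInversion cs ht
      have hne := ht.length_mul_right_ne w₀⁻¹
      have hle : ℓ (t * w₀⁻¹) ≤ ℓ w₀ := hmax _
      have : ℓ w₀⁻¹ = ℓ w₀ := cs.length_inv w₀
      omega
    have h2 : nL cs w₀ t = true := by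
      apply nL_of_isLeftInversion cs ht
      have hne := ht.length_mul_right_ne w₀
      have hle : ℓ (t * w₀) ≤ ℓ w₀ := hmax _
      omega
    rw [h1, h2]
  · rw [nL_eq_false_of_not_reflection cs ht, nL_eq_false_of_not_reflection cs ht]

/-- The Demazure product of a word has a reduced word that is a sublist of it. -/
theorem demazure_subword (L : List ι) :
    ∃ w : List ι, w.Sublist L ∧ cs.IsReduced w ∧
      π w = List.foldl (fun u i => if ℓ u < ℓ (u * s i) then u * s i else u) 1 L := by
  induction L using List.reverseRecOn with
  | nil =>
    refine ⟨[], List.Sublist.refl [], ?_, by simp [cs.wordProd_nil]⟩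
    unfold CoxeterSystem.IsReduced
    simp [cs.wordProd_nil]
  | append_singleton L j ih =>
    obtain ⟨w, hsub, hred, hπ⟩ := ih
    rw [List.foldl_append]
    simp only [List.foldl_cons, List.foldl_nil]
    set D := List.foldl (fun u i => if ℓ u < ℓ (u * s i) then u * s i else u) 1 L with hD
    by_cases hlt : ℓ D < ℓ (D * s j)
    · rw [if_pos hlt]
      refine ⟨w ++ [j], hsub.append (List.Sublist.refl [j]), ?_, ?_⟩
      · unfold CoxeterSystem.IsReduced
        rw [cs.wordProd_append]
        have hj : π [j] = s j := by rw [cs.wordProd_cons, cs.wordProd_nil, mul_one]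
        rw [hj, hπ]
        have := cs.length_mul_simple D j
        have hlenw : ℓ D = w.length := by rw [← hπ]; exact hred
        simp only [List.length_append, List.length_cons, List.length_nil]
        omega
      · rw [cs.wordProd_append]
        have hj : π [j] = s j := by rw [cs.wordProd_cons, cs.wordProd_nil, mul_one]
        rw [hj, hπ]
    · rw [if_neg hlt]
      exact ⟨w, hsub.trans (List.sublist_append_left L [j]), hred, hπ⟩

/-- One step of the greedy (positive distinguished subexpression) recursion. -/
theorem greedy_step {j : ι} {R : List ι} {x : W}
    (hw : ∃ w, w.Sublist (j :: R) ∧ cs.IsReduced w ∧ π w = x) :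
    ∃ w', w'.Sublist R ∧ cs.IsReduced w' ∧
      π w' = (if ℓ (s j * x) < ℓ x then s j * x else x) := by
  obtain ⟨w, hsub, hred, hπ⟩ := hw
  rcases List.sublist_cons_iff.mp hsub with hcase | ⟨w₂, rfl, hw₂⟩
  · -- witness does not use the head
    by_cases hlt : ℓ (s j * x) < ℓ x
    · rw [if_pos hlt]
      subst hπ
      obtain ⟨k, hk, hex⟩ := left_exchange cs hred hlt
      refine ⟨w.eraseIdx k, (List.eraseIdx_sublist w k).trans hcase, ?_, hex.symm⟩
      unfold CoxeterSystem.IsReduced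
      rw [← hex]
      have h1 := cs.length_simple_mul (π w) j
      have h2 : (w.eraseIdx k).length = w.length - 1 := by
        rw [List.length_eraseIdx]
        simp [hk]
      have h3 : ℓ (π w) = w.length := hred
      omega
    · rw [if_neg hlt]
      exact ⟨w, hcase, hred, hπ⟩
  · -- witness uses the head: x = s j * π w₂
    have hx : x = s j * π w₂ := by rw [← hπ, cs.wordProd_cons]
    have hlen2 : ℓ (π w₂) = w₂.length := by
      have h3 : ℓ (π (j :: w₂)) = w₂.length + 1 := by
        have := hred
        unfold CoxeterSystem.IsReduced at this
        simpa using this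
      have h4 : ℓ (s j * x) < ℓ x ∨ ℓ (s j * x) = ℓ x + 1 := by
        have := cs.length_simple_mul x j
        omega
      have h5 : s j * x = π w₂ := by rw [hx, cs.simple_mul_simple_cancel_left]
      have h6 : ℓ (π w₂) ≤ w₂.length := cs.length_wordProd_le w₂
      have h7 : ℓ x = w₂.length + 1 := by rw [← hπ] at *; exact h3
      rcases h4 with h4 | h4
      · rw [h5, h7] at h4
        have := cs.length_simple_mul x j
        rw [h5, h7] at this
        omega
      · rw [h5, h7] at h4
        omega
    have hdesc : ℓ (s j * x) < ℓ x := by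
      have h5 : s j * x = π w₂ := by rw [hx, cs.simple_mul_simple_cancel_left]
      have h7 : ℓ x = w₂.length + 1 := by
        have h3 : ℓ (π (j :: w₂)) = w₂.length + 1 := by
          have := hred
          unfold CoxeterSystem.IsReduced at this
          simpa using this
        rw [← hπ]; exact h3
      rw [h5, hlen2, h7]
      omega
    rw [if_pos hdesc]
    refine ⟨w₂, hw₂, hlen2, ?_⟩
    rw [hx, cs.simple_mul_simple_cancel_left]

end PDS


/-- Let `W` be a Weyl group (a Coxeter group with a longest element `w₀`) and
`β = i₁ … i_m` a word in simple-reflection indices whose Demazure product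
`s_{i₁} * ⋯ * s_{i_m}` (where `u * s := max(u, us)` in Bruhat order, computed via
lengths) equals `w₀`.  Then the positive distinguished subexpression
`(u₀, …, u_m)`, defined by `u_m := w₀` and
`u_{c-1} := min(u_c, s_{i_c} u_c)` (the shorter of the two), is a
`w₀`-subexpression: `u₀ = id`, `u_m = w₀`, and for each `c` either
`u_{c-1} = u_c` or `u_{c-1} = s_{i_c} u_c`. -/
theorem positive_distinguished_subexpression {ι W : Type*} [Group W]
    {M : CoxeterMatrix ι} (cs : CoxeterSystem M W)
    (w₀ : W) (hmax : ∀ w : W, cs.length w ≤ cs.length w₀)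
    {m : ℕ} (β : Fin m → ι)
    (hdem : List.foldl
      (fun u i => if cs.length u < cs.length (u * cs.simple i) then u * cs.simple i else u)
      1 (List.ofFn β) = w₀)
    (u : Fin (m + 1) → W)
    (hm : u (Fin.last m) = w₀)
    (hrec : ∀ c : Fin m, u c.castSucc =
      if cs.length (cs.simple (β c) * u c.succ) < cs.length (u c.succ)
      then cs.simple (β c) * u c.succ else u c.succ) :
    u 0 = 1 ∧
    ∀ c : Fin m, u c.castSucc = u c.succ ∨ u c.castSucc = cs.simple (β c) * u c.succ := by
  constructor
  · -- u 0 = 1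
    set L := List.ofFn β with hL
    have hLlen : L.length = m := by simp [hL]
    -- base: a reduced word for w₀ that is a sublist of L.reverse
    have hbase : ∃ w : List ι, w.Sublist L.reverse ∧ cs.IsReduced w ∧ cs.wordProd w = w₀ := by
      obtain ⟨w, hsub, hred, hπ⟩ := PDS.demazure_subword cs L
      rw [hdem] at hπ
      refine ⟨w.reverse, hsub.reverse, (cs.isReduced_reverse_iff w).mpr hred, ?_⟩
      rw [cs.wordProd_reverse, hπ]
      exact PDS.max_inv_eq cs hmax
    have key : ∀ k : ℕ, (h : k ≤ m) →
        ∃ w : List ι, w.Sublist ((L.take (m - k)).reverse) ∧ cs.IsReduced w ∧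
          cs.wordProd w = u ⟨m - k, by omega⟩ := by
      intro k
      induction k with
      | zero =>
        intro _
        simp only [Nat.sub_zero]
        have htake : L.take m = L := by
          rw [← hLlen]
          exact List.take_length  -- take of full length
        rw [htake]
        have hlast : (⟨m, by omega⟩ : Fin (m+1)) = Fin.last m := rfl
        rw [hlast, hm]
        exact hbase
      | succ k ih =>
        intro hk1
        have hkm : k ≤ m := by omega
        obtain ⟨w, hsub, hred, hπ⟩ := ih hkm
        set c := m - (k+1) with hc
        have hcm : c < m := by omega
        have hmk : m - k = c + 1 := by omega
        have hfin : (⟨m - k, by omega⟩ : Fin (m+1)) = ⟨c + 1, by omega⟩ := by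
          apply Fin.ext
          simpa using hmk
        rw [hfin] at hπ
        have htake : L.take (c+1) = L.take c ++ [β ⟨c, hcm⟩] := by
          rw [List.take_succ]
          congr 1
          have hget : L[c]? = some (β ⟨c, hcm⟩) := by
            rw [List.getElem?_eq_getElem (by omega)]
            congr 1
            simp [hL]
          rw [hget]
          rfl
        have hrev : (L.take (m-k)).reverse = β ⟨c, hcm⟩ :: (L.take c).reverse := by
          rw [hmk, htake]
          simp
        rw [hrev] at hsub
        have hstep := PDS.greedy_step cs (j := β ⟨c, hcm⟩) (R := (L.take c).reverse)
          (x := u ⟨c + 1, by omega⟩) ⟨w, hsub, hred, hπ⟩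
        obtain ⟨w', hsub', hred', hπ'⟩ := hstep
        refine ⟨w', by rwa [hc] at hsub', hred', ?_⟩
        have hcs : (⟨c, hcm⟩ : Fin m).succ = ⟨c + 1, by omega⟩ := rfl
        have hcc : (⟨c, hcm⟩ : Fin m).castSucc = ⟨c, by omega⟩ := rfl
        have := hrec ⟨c, hcm⟩
        rw [hcs, hcc] at this
        rw [hπ', ← this]
    obtain ⟨w, hsub, hred, hπ⟩ := key m (le_refl m)
    have hs0 : m - m = 0 := Nat.sub_self m
    rw [hs0] at hsub
    simp only [List.take_zero, List.reverse_nil] at hsub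
    have hw : w = [] := List.sublist_nil.mp hsub
    subst hw
    have h0 : u 0 = u ⟨m - m, by omega⟩ := by
      congr 1
      exact Fin.ext (by simp)
    rw [h0, ← hπ, cs.wordProd_nil]
  · intro c
    rw [hrec c]
    by_cases h : cs.length (cs.simple (β c) * u c.succ) < cs.length (u c.succ)
    · right; rw [if_pos h]
    · left; rw [if_neg h]
end

section
/- If a seed Σ is really full rank after freezing at a mutable index s connected to a frozen index f with B̃_{fs} = ±1 and B̃_{fj} = 0 for all other mutable j, then Σ itself is really full rank. More precisely: let B̃ be an (n+m)×n integer matrix whose columns, after deleting column s, span ℤ^{n−1} (as the exchange matrix of the frozen seed), and suppose row f of B̃ has a single nonzero entry, equal to ±1, located in column s. Then the columns of B̃ span ℤⁿ over ℤ. -/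
/-- Really-full-rank propagation under deletion.  Let `B` be an `(n+m) × n` integer
extended exchange matrix (rows indexed by all variables, with the first `n` rows
mutable; columns indexed by the mutable variables).  "Really full rank" means that the
columns of `B` span a rank-`n` direct summand of `ℤ^{n+m}`, i.e. `B` admits an integer
left inverse.  Suppose there is a (frozen) row `f` whose unique nonzero entry is `±1`,
located in a column `s`, and that the matrix obtained from `B` by deleting column `s`
is really full rank (admits an integer left inverse).  Then `B` itself is really full
rank. -/
theorem really_full_rank_of_freezing {n m : ℕ}
    (B : Matrix (Fin (n + m)) (Fin n) ℤ) (f : Fin (n + m)) (s : Fin n)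
    (hf_frozen : n ≤ (f : ℕ))
    (hfs : B f s = 1 ∨ B f s = -1)
    (hf : ∀ j : Fin n, j ≠ s → B f j = 0)
    (hdel : ∃ A : Matrix {j : Fin n // j ≠ s} (Fin (n + m)) ℤ,
      A * (Matrix.of fun (i : Fin (n + m)) (j : {j : Fin n // j ≠ s}) => B i (j : Fin n)) = 1) :
    ∃ A : Matrix (Fin n) (Fin (n + m)) ℤ, A * B = 1 := by
  obtain ⟨A', hA'⟩ := hdel
  have hε : B f s * B f s = 1 := by rcases hfs with h | h <;> simp [h]
  refine ⟨Matrix.of fun j i =>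
    if hj : j = s then B f s * (if i = f then 1 else 0)
    else A' ⟨j, hj⟩ i - ((∑ i', A' ⟨j, hj⟩ i' * B i' s) * B f s) *
      (if i = f then 1 else 0), ?_⟩
  ext j k
  simp only [Matrix.mul_apply, Matrix.of_apply, Matrix.one_apply]
  by_cases hj : j = s
  · subst hj
    simp only [dif_pos, mul_ite, ite_mul, mul_one, mul_zero, zero_mul,
      Finset.sum_ite_eq', Finset.mem_univ, if_true]
    by_cases hk : k = j
    · subst hk; simp [hε]
    · rw [hf k hk]
      simp [hk, Ne.symm hk]
  · simp only [dif_neg hj, sub_mul, mul_ite, ite_mul, mul_one, mul_zero, zero_mul,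
      Finset.sum_sub_distrib, Finset.sum_ite_eq', Finset.mem_univ, if_true]
    by_cases hk : k = s
    · subst hk
      rw [mul_assoc, hε, mul_one]
      simp [hj]
    · rw [hf k hk, mul_zero, sub_zero]
      have := congrFun (congrFun hA' ⟨j, hj⟩) ⟨k, hk⟩
      simp only [Matrix.mul_apply, Matrix.of_apply, Matrix.one_apply] at this
      rw [this]
      by_cases h : j = k
      · subst h; simp
      · simp [h, fun hh => h (Subtype.mk.injEq .. ▸ hh)]
end

section
/- Under the weak σ-admissibility assumptions and quasi-admissibility of the orbit [j] (for all mutable orbits [k], B̃̇_{k'j'}·B̃̇_{k''j'} ≥ 0 for all k', k'' ∈ [k] and j' ∈ [j]), the exchange matrix of the orbit-mutated seed μ_{[j]}(Σ̃) is again σ-invariant: (μ_{[j]} B̃̇)_{σ(a)σ(b)} = (μ_{[j]} B̃̇)_{ab}, and for every mutable orbit [k], (μ_{[j]} B̃̇)_{k'k''} = 0 for all k', k'' ∈ [k]. -/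
/-- Fomin–Zelevinsky matrix mutation in direction `k`. -/
def mutateB {ι : Type*} [DecidableEq ι] (B : ι → ι → ℤ) (k : ι) : ι → ι → ℤ :=
  fun a b =>
    if a = k ∨ b = k then -B a b
    else B a b + (|B a k| * B k b + B a k * |B k b|) / 2

lemma t_zero (x y : ℤ) (h : x * y ≤ 0) : |x| * y + x * |y| = 0 := by
  rcases le_or_gt 0 x with hx | hx
  · rcases le_or_gt 0 y with hy | hy
    · have h0 : x * y = 0 := le_antisymm h (mul_nonneg hx hy)
      rcases mul_eq_zero.mp h0 with h1 | h1 <;> simp [h1]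
    · rw [abs_of_nonneg hx, abs_of_neg hy]; ring
  · rcases le_or_gt 0 y with hy | hy
    · rw [abs_of_neg hx, abs_of_nonneg hy]; ring
    · nlinarith [mul_pos_of_neg_of_neg hx hy]

lemma mutateB_hit {ι : Type*} [DecidableEq ι] (B : ι → ι → ℤ) (k a b : ι)
    (h : a = k ∨ b = k) : mutateB B k a b = -B a b := by
  simp [mutateB, h]

lemma mutateB_miss {ι : Type*} [DecidableEq ι] (B : ι → ι → ℤ) (k a b : ι)
    (ha : a ≠ k) (hb : b ≠ k) :
    mutateB B k a b = B a b + (|B a k| * B k b + B a k * |B k b|) / 2 := by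
  simp [mutateB, ha, hb]

lemma mutate_formula {ι : Type*} [DecidableEq ι] (B : ι → ι → ℤ) (l : List ι)
    (hnd : l.Nodup) (hz : ∀ x ∈ l, ∀ y ∈ l, B x y = 0) (a b : ι) :
    (List.foldl mutateB B l) a b =
      if a ∈ l then (if b ∈ l then 0 else -B a b)
      else if b ∈ l then -B a b
      else B a b + (l.map (fun j' => (|B a j'| * B j' b + B a j' * |B j' b|) / 2)).sum := by
  induction l generalizing B a b with
  | nil => simp
  | cons k l' ih =>
    have hk : k ∉ l' := (List.nodup_cons.mp hnd).1
    have hnd' : l'.Nodup := (List.nodup_cons.mp hnd).2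
    have hBkk : B k k = 0 := hz k (List.mem_cons_self) k (List.mem_cons_self)
    have hBxk : ∀ x ∈ l', B x k = 0 := fun x hx =>
      hz x (List.mem_cons_of_mem _ hx) k (List.mem_cons_self)
    have hBky : ∀ y ∈ l', B k y = 0 := fun y hy =>
      hz k (List.mem_cons_self) y (List.mem_cons_of_mem _ hy)
    have hz' : ∀ x ∈ l', ∀ y ∈ l', mutateB B k x y = 0 := by
      intro x hx y hy
      have h1 : B x y = 0 := hz x (List.mem_cons_of_mem _ hx) y (List.mem_cons_of_mem _ hy)
      unfold mutateB
      split_ifs with h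
      · simp [h1]
      · simp [h1, hBxk _ hx]
    rw [List.foldl_cons, ih (mutateB B k) hnd' hz']
    by_cases hak : a = k
    · rw [hak, if_neg hk, if_pos (List.mem_cons_self)]
      by_cases hbk : b = k
      · rw [hbk, if_neg hk, if_pos (List.mem_cons_self)]
        rw [mutateB_hit _ _ _ _ (Or.inl rfl), hBkk, List.sum_eq_zero ?h1]
        · simp
        case h1 =>
          intro x hx
          obtain ⟨j', hj', rfl⟩ := List.mem_map.mp hx
          rw [mutateB_hit _ _ _ _ (Or.inl rfl), hBky _ hj']
          simp
      · by_cases hbl : b ∈ l'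
        · rw [if_pos hbl, if_pos (List.mem_cons_of_mem _ hbl)]
          rw [mutateB_hit _ _ _ _ (Or.inl rfl), hBky _ hbl]
          simp
        · have hbm : b ∉ k :: l' := by simp [hbk, hbl]
          rw [if_neg hbl, if_neg hbm, mutateB_hit _ _ _ _ (Or.inl rfl),
            List.sum_eq_zero ?h2]
          · simp
          case h2 =>
            intro x hx
            obtain ⟨j', hj', rfl⟩ := List.mem_map.mp hx
            rw [mutateB_hit _ _ _ _ (Or.inl rfl), hBky _ hj']
            simp
    · by_cases hal : a ∈ l'
      · rw [if_pos hal, if_pos (List.mem_cons_of_mem _ hal)]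
        by_cases hbk : b = k
        · rw [hbk, if_pos (List.mem_cons_self), mutateB_hit _ _ _ _ (Or.inr rfl),
            hBxk _ hal]
          simp
        · by_cases hbl : b ∈ l'
          · rw [if_pos hbl, if_pos (List.mem_cons_of_mem _ hbl)]
          · have hbm : b ∉ k :: l' := by simp [hbk, hbl]
            rw [if_neg hbl, if_neg hbm, mutateB_miss _ _ _ _ hak hbk, hBxk _ hal]
            simp
      · have ham : a ∉ k :: l' := by simp [hak, hal]
        rw [if_neg hal, if_neg ham]
        by_cases hbk : b = k
        · rw [hbk, if_neg hk, if_pos (List.mem_cons_self),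
            mutateB_hit _ _ _ _ (Or.inr rfl), List.sum_eq_zero ?h3]
          · simp
          case h3 =>
            intro x hx
            obtain ⟨j', hj', rfl⟩ := List.mem_map.mp hx
            rw [mutateB_hit _ _ _ _ (Or.inr rfl), hBxk _ hj']
            simp
        · by_cases hbl : b ∈ l'
          · rw [if_pos hbl, if_pos (List.mem_cons_of_mem _ hbl),
              mutateB_miss _ _ _ _ hak hbk, hBky _ hbl]
            simp
          · have hbm : b ∉ k :: l' := by simp [hbk, hbl]
            rw [if_neg hbl, if_neg hbm, mutateB_miss _ _ _ _ hak hbk]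
            have hmap : l'.map (fun j' =>
                (|mutateB B k a j'| * mutateB B k j' b + mutateB B k a j' * |mutateB B k j' b|) / 2)
                = l'.map (fun j' => (|B a j'| * B j' b + B a j' * |B j' b|) / 2) := by
              apply List.map_congr_left
              intro j' hj'
              have hj'k : j' ≠ k := fun h => hk (h ▸ hj')
              have e1 : mutateB B k a j' = B a j' := by
                rw [mutateB_miss _ _ _ _ hak hj'k, hBky _ hj']
                simp
              have e2 : mutateB B k j' b = B j' b := by
                rw [mutateB_miss _ _ _ _ hj'k hbk, hBxk _ hj']
                simp
              rw [e1, e2]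
            rw [hmap, List.map_cons, List.sum_cons]
            ring

lemma isMut_zpow {ι : Type*} (σ : Equiv.Perm ι) (isMut : ι → Prop)
    (h : ∀ a, isMut a ↔ isMut (σ a)) : ∀ (n : ℤ) (a : ι), isMut ((σ ^ n) a) ↔ isMut a := by
  have hinv : ∀ a, isMut (σ⁻¹ a) ↔ isMut a := by
    intro a
    conv_rhs => rw [← Equiv.apply_symm_apply σ a]
    exact h _
  intro n
  induction n using Int.induction_on with
  | zero => simp
  | succ n ih =>
    intro a
    have : (σ ^ ((n : ℤ) + 1)) a = (σ ^ (n : ℤ)) (σ a) := by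
      rw [zpow_add, zpow_one, Equiv.Perm.mul_apply]
    rw [this, ih (σ a), ← h a]
  | pred n ih =>
    intro a
    have : (σ ^ ((-n : ℤ) - 1)) a = (σ ^ (-n : ℤ)) (σ⁻¹ a) := by
      rw [show (-(n : ℤ)) - 1 = -(n : ℤ) + -1 by ring, zpow_add, Equiv.Perm.mul_apply,
        zpow_neg_one]
    rw [this, ih (σ⁻¹ a), hinv a]

/-- Let `B` be a skew-symmetric integer exchange matrix on `J̃`, invariant under a
permutation `σ` whose orbits are entirely mutable or entirely frozen, with
`B_{a'a''} = 0` for `a', a''` in a common mutable orbit (weak `σ`-admissibility).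
Let `[j]` be a mutable `σ`-orbit (enumerated by a duplicate-free list `l`), and assume
quasi-admissibility of `μ_{[j]}`: `B_{k'j'} · B_{k''j'} ≥ 0` for all mutable `k', k''`
in a common orbit and all `j' ∈ [j]`.  Then the orbit-mutated matrix `μ_{[j]} B`
(mutation once at each index of `[j]`) is again `σ`-invariant, and it vanishes within
every mutable orbit. -/
theorem orbit_mutation_weakly_admissible {ι : Type*} [Fintype ι] [DecidableEq ι]
    (B : ι → ι → ℤ) (σ : Equiv.Perm ι) (isMut : ι → Prop)
    (hskew : ∀ a b, B b a = -B a b)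
    (hinv : ∀ a b, B (σ a) (σ b) = B a b)
    (hmutorb : ∀ a, isMut a ↔ isMut (σ a))
    (horb : ∀ a b, isMut a → σ.SameCycle a b → B a b = 0)
    (j : ι) (hj : isMut j)
    (hqa : ∀ k' k'' j', isMut k' → σ.SameCycle k' k'' → σ.SameCycle j j' →
      0 ≤ B k' j' * B k'' j')
    (l : List ι) (hl : l.Nodup) (hmem : ∀ z, z ∈ l ↔ σ.SameCycle j z) :
    (∀ a b, (List.foldl mutateB B l) (σ a) (σ b) = (List.foldl mutateB B l) a b) ∧
    (∀ k' k'', isMut k' → σ.SameCycle k' k'' → (List.foldl mutateB B l) k' k'' = 0) := by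
  have hmz := isMut_zpow σ isMut hmutorb
  have hmut_l : ∀ x ∈ l, isMut x := by
    intro x hx
    obtain ⟨n, hn⟩ := (hmem x).mp hx
    rw [← hn]
    exact (hmz n j).mpr hj
  have hzl : ∀ x ∈ l, ∀ y ∈ l, B x y = 0 := by
    intro x hx y hy
    exact horb x y (hmut_l x hx) (((hmem x).mp hx).symm.trans ((hmem y).mp hy))
  have hform := mutate_formula B l hl hzl
  constructor
  · intro a b
    rw [hform, hform]
    have h1 : (σ a ∈ l) = (a ∈ l) := by
      simp only [hmem]
      exact propext (σ.sameCycle_apply_right)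
    have h2 : (σ b ∈ l) = (b ∈ l) := by
      simp only [hmem]
      exact propext (σ.sameCycle_apply_right)
    have hsum : (l.map (fun j' =>
        (|B (σ a) j'| * B j' (σ b) + B (σ a) j' * |B j' (σ b)|) / 2)).sum
        = (l.map (fun j' => (|B a j'| * B j' b + B a j' * |B j' b|) / 2)).sum := by
      rw [← List.sum_toFinset _ hl, ← List.sum_toFinset _ hl]
      refine Finset.sum_nbij' (fun x => σ⁻¹ x) (fun x => σ x) ?_ ?_ ?_ ?_ ?_
      · intro x hx
        rw [List.mem_toFinset] at hx ⊢
        rw [hmem] at hx ⊢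
        exact (σ.sameCycle_symm_apply_right).mpr hx
      · intro x hx
        rw [List.mem_toFinset] at hx ⊢
        rw [hmem] at hx ⊢
        exact (σ.sameCycle_apply_right).mpr hx
      · intro x _; simp
      · intro x _; simp
      · intro x _
        have e1 : B (σ a) x = B a (σ⁻¹ x) := by
          conv_lhs => rw [← Equiv.apply_symm_apply σ x]
          exact hinv a (σ⁻¹ x)
        have e2 : B x (σ b) = B (σ⁻¹ x) b := by
          conv_lhs => rw [← Equiv.apply_symm_apply σ x]
          exact hinv (σ⁻¹ x) b
        rw [e1, e2]
    simp only [h1, h2, hinv, hsum]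
  · intro k' k'' hm hsc
    rw [hform]
    by_cases hk'l : k' ∈ l
    · have hk''l : k'' ∈ l := (hmem k'').mpr (((hmem k').mp hk'l).trans hsc)
      rw [if_pos hk'l, if_pos hk''l]
    · have hk''l : k'' ∉ l := fun h =>
        hk'l ((hmem k').mpr (((hmem k'').mp h).trans hsc.symm))
      rw [if_neg hk'l, if_neg hk''l, horb k' k'' hm hsc, zero_add]
      apply List.sum_eq_zero
      intro x hx
      obtain ⟨j', hj', rfl⟩ := List.mem_map.mp hx
      have hq := hqa k' k'' j' hm hsc ((hmem j').mp hj')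
      have hle : B k' j' * B j' k'' ≤ 0 := by
        rw [hskew k'' j', mul_neg, neg_nonpos]
        exact hq
      rw [t_zero _ _ hle]
      simp
end

section
/- Unique intermediate flag: in a group with BN-pair, if F →ᵛʷ F'' with ℓ(vw) = ℓ(v) + ℓ(w), then there exists a unique flag F' with F →ᵛ F' and F' →ʷ F''. -/
open Pointwise

/-- A (Tits) BN-pair datum on a group `G` with Weyl group the Coxeter system `cs`:
a Borel subgroup `B` together with the Bruhat cells `C w = B ẇ B`, satisfying the
Bruhat decomposition `G = ⨆_w C w` (disjoint), each `C w` a single `(B, B)`-double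
coset, compatibility with inversion, Tits' multiplication axiom
`C s · C w ⊆ C (s w) ∪ C w` for simple reflections `s`, and `s B s ⊄ B`. -/
structure BNPair (G : Type*) [Group G] {ι W : Type*} [Group W] {M : CoxeterMatrix ι}
    (cs : CoxeterSystem M W) where
  B : Subgroup G
  C : W → Set G
  cell_one : C 1 = (B : Set G)
  cell_nonempty : ∀ w, (C w).Nonempty
  mem_mul_mem : ∀ (w : W) (g b₁ b₂ : G), g ∈ C w → b₁ ∈ B → b₂ ∈ B →
    b₁ * g * b₂ ∈ C w
  single_coset : ∀ (w : W) (g g' : G), g ∈ C w → g' ∈ C w →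
    ∃ b₁ ∈ B, ∃ b₂ ∈ B, g' = b₁ * g * b₂
  decomp : ∀ g : G, ∃! w : W, g ∈ C w
  inv_cell : ∀ w, (C w)⁻¹ = C w⁻¹
  simple_mul : ∀ (i : ι) (w : W),
    C (cs.simple i) * C w ⊆ C (cs.simple i * w) ∪ C w
  simple_nontrivial : ∀ i : ι, ¬ (C (cs.simple i) * C (cs.simple i) ⊆ C 1)

namespace BNPair

variable {G ι W : Type*} [Group G] [Group W] {M : CoxeterMatrix ι}
  {cs : CoxeterSystem M W}

/-- Flags `F = gB` and `F' = g'B` are in relative position `u`, written `F →ᵘ F'`,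
if `g⁻¹ g' ∈ B u B`. -/
def Rel (bn : BNPair G cs) (u : W) (F F' : G ⧸ bn.B) : Prop :=
  ∃ g g' : G, F = QuotientGroup.mk g ∧ F' = QuotientGroup.mk g' ∧ g⁻¹ * g' ∈ bn.C u

-- Auxiliary lemmas
variable (bn : BNPair G cs)

lemma cell_eq_of_mem {u u' : W} {g : G} (h : g ∈ bn.C u) (h' : g ∈ bn.C u') : u = u' := by
  obtain ⟨x, -, hx⟩ := bn.decomp g
  rw [hx u h, hx u' h']

lemma inv_mem_cell {u : W} {g : G} (h : g ∈ bn.C u) : g⁻¹ ∈ bn.C u⁻¹ := by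
  rw [← bn.inv_cell]
  exact Set.inv_mem_inv.mpr h

lemma inv_mem_cell_simple {i : ι} {g : G} (h : g ∈ bn.C (cs.simple i)) :
    g⁻¹ ∈ bn.C (cs.simple i) := by
  have := bn.inv_mem_cell h
  rwa [cs.inv_simple] at this

lemma T3_left (i : ι) {w : W} {a y : G} (ha : a ∈ bn.C (cs.simple i)) (hy : y ∈ bn.C w) :
    a * y ∈ bn.C (cs.simple i * w) ∨ a * y ∈ bn.C w :=
  bn.simple_mul i w (Set.mul_mem_mul ha hy)

lemma T3_right (i : ι) {u : W} {x c : G} (hx : x ∈ bn.C u) (hc : c ∈ bn.C (cs.simple i)) :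
    x * c ∈ bn.C (u * cs.simple i) ∨ x * c ∈ bn.C u := by
  rcases bn.T3_left i (bn.inv_mem_cell_simple hc) (bn.inv_mem_cell hx) with h | h
  · left
    simpa [mul_inv_rev, cs.inv_simple] using bn.inv_mem_cell h
  · right
    simpa [mul_inv_rev] using bn.inv_mem_cell h

lemma mem_cell_of_inv {u : W} {g : G} (h : g⁻¹ ∈ bn.C u⁻¹) : g ∈ bn.C u := by
  have := bn.inv_mem_cell h
  simpa using this

lemma simple_mul_mem : ∀ n : ℕ, ∀ w : W, cs.length w = n → ∀ i : ι,
    cs.length (cs.simple i * w) = n + 1 →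
    ∀ a ∈ bn.C (cs.simple i), ∀ y ∈ bn.C w, a * y ∈ bn.C (cs.simple i * w) := by
  intro n
  induction n using Nat.strong_induction_on with
  | _ n IH =>
    intro w hw i hlen a ha y hy
    rcases bn.T3_left i ha hy with hgood | hbad
    · exact hgood
    exfalso
    rcases Nat.eq_zero_or_pos n with hn | hn
    · -- base case: w = 1
      have hw1 : w = 1 := cs.length_eq_zero_iff.mp (by omega)
      subst hw1
      have hyB : y ∈ bn.B := by rwa [bn.cell_one] at hy
      have h1 : a * y ∈ bn.C (cs.simple i) := by
        have := bn.mem_mul_mem (cs.simple i) a 1 y ha (one_mem _) hyB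
        rwa [one_mul] at this
      have heq := bn.cell_eq_of_mem h1 hbad
      have h2 : cs.length (cs.simple i) = 1 := cs.length_simple i
      rw [heq, cs.length_one] at h2
      exact absurd h2 (by norm_num)
    · -- inductive step
      have hwne : w ≠ 1 := by
        intro e; rw [e, cs.length_one] at hw; omega
      obtain ⟨t, ht⟩ := cs.exists_rightDescent_of_ne_one hwne
      have htl : cs.length (w * cs.simple t) + 1 = cs.length w := cs.isRightDescent_iff.mp ht
      obtain ⟨w', hw'def⟩ : ∃ x, x = w * cs.simple t := ⟨_, rfl⟩
      have hwdec : w = w' * cs.simple t := by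
        rw [hw'def, mul_assoc, cs.simple_mul_simple_self, mul_one]
      have hlw' : cs.length w' = n - 1 := by rw [hw'def]; omega
      have h1 : cs.length (cs.simple i * w') = cs.length w' + 1 := by
        have hle := cs.length_mul_le (cs.simple i) w'
        rw [cs.length_simple] at hle
        have hge : cs.length (cs.simple i * w) ≤ cs.length (cs.simple i * w') + 1 := by
          have h2 := cs.length_mul_le (cs.simple i * w') (cs.simple t)
          rw [cs.length_simple] at h2
          calc cs.length (cs.simple i * w) = cs.length (cs.simple i * w' * cs.simple t) := by
                rw [mul_assoc, ← hwdec]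
            _ ≤ cs.length (cs.simple i * w') + 1 := h2
        omega
      obtain ⟨p, hp⟩ := bn.cell_nonempty w'
      obtain ⟨q, hq⟩ := bn.cell_nonempty (cs.simple t)
      have e : cs.simple t * w'⁻¹ = w⁻¹ := by
        rw [hwdec, mul_inv_rev, cs.inv_simple]
      have hpq : p * q ∈ bn.C w := by
        apply bn.mem_cell_of_inv
        have hlen' : cs.length (cs.simple t * w'⁻¹) = (n - 1) + 1 := by
          rw [e, cs.length_inv]; omega
        have hmem := IH (n - 1) (by omega) w'⁻¹ (by rw [cs.length_inv, hlw']) t hlen'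
          q⁻¹ (bn.inv_mem_cell_simple hq) p⁻¹ (bn.inv_mem_cell hp)
        rw [e] at hmem
        rwa [mul_inv_rev]
      obtain ⟨b₁, hb₁, b₂, hb₂, hyd⟩ := bn.single_coset w (p * q) y hpq hy
      have hbp : b₁ * p ∈ bn.C w' := by
        have := bn.mem_mul_mem w' p b₁ 1 hp hb₁ (one_mem _)
        rwa [mul_one] at this
      have hqb : q * b₂ ∈ bn.C (cs.simple t) := by
        have := bn.mem_mul_mem (cs.simple t) q 1 b₂ hq (one_mem _) hb₂
        rwa [one_mul] at this
      have habp : a * (b₁ * p) ∈ bn.C (cs.simple i * w') :=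
        IH (n - 1) (by omega) w' hlw' i (by omega) a ha _ hbp
      have key : a * y = a * (b₁ * p) * (q * b₂) := by
        rw [hyd]; group
      rcases bn.T3_right t habp hqb with hc | hc
      · rw [← key] at hc
        have heq := bn.cell_eq_of_mem hbad hc
        rw [mul_assoc, ← hwdec] at heq
        have h3 := congrArg cs.length heq
        omega
      · rw [← key] at hc
        have heq := bn.cell_eq_of_mem hbad hc
        have h3 : cs.simple i * w = w' := by
          rw [heq, ← mul_assoc, cs.simple_mul_simple_self, one_mul]
        rw [h3, hlw'] at hlen
        omega

lemma mul_mem_cell : ∀ n : ℕ, ∀ v : W, cs.length v = n → ∀ w : W,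
    cs.length (v * w) = cs.length v + cs.length w →
    ∀ a ∈ bn.C v, ∀ y ∈ bn.C w, a * y ∈ bn.C (v * w) := by
  intro n
  induction n with
  | zero =>
    intro v hv w hlen a ha y hy
    have hv1 : v = 1 := cs.length_eq_zero_iff.mp hv
    subst hv1
    rw [bn.cell_one] at ha
    rw [one_mul]
    have := bn.mem_mul_mem w y a 1 hy ha (one_mem _)
    rwa [mul_one] at this
  | succ n IHn =>
    intro v hv w hlen a ha y hy
    have hvne : v ≠ 1 := by
      intro e; rw [e, cs.length_one] at hv; omega
    obtain ⟨i, hi⟩ := cs.exists_leftDescent_of_ne_one hvne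
    have hdl : cs.length (cs.simple i * v) + 1 = cs.length v := cs.isLeftDescent_iff.mp hi
    obtain ⟨v', hv'def⟩ : ∃ x, x = cs.simple i * v := ⟨_, rfl⟩
    have hvdec : v = cs.simple i * v' := by
      rw [hv'def, ← mul_assoc, cs.simple_mul_simple_self, one_mul]
    have hlv' : cs.length v' = n := by rw [hv'def]; omega
    have hsv' : cs.length (cs.simple i * v') = n + 1 := by rw [← hvdec, hv]
    -- decompose a = (b₁ * p) * (q * b₂) with b₁p ∈ C (s i), q b₂ ∈ C v'
    obtain ⟨p, hp⟩ := bn.cell_nonempty (cs.simple i)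
    obtain ⟨q, hq⟩ := bn.cell_nonempty v'
    have hpq : p * q ∈ bn.C v := by
      rw [hvdec]
      exact bn.simple_mul_mem n v' hlv' i hsv' p hp q hq
    obtain ⟨b₁, hb₁, b₂, hb₂, hadec⟩ := bn.single_coset v (p * q) a hpq ha
    have hbp : b₁ * p ∈ bn.C (cs.simple i) := by
      have := bn.mem_mul_mem (cs.simple i) p b₁ 1 hp hb₁ (one_mem _)
      rwa [mul_one] at this
    have hqb : q * b₂ ∈ bn.C v' := by
      have := bn.mem_mul_mem v' q 1 b₂ hq (one_mem _) hb₂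
      rwa [one_mul] at this
    -- lengths
    have hv'w : cs.length (v' * w) = cs.length v' + cs.length w := by
      have hle := cs.length_mul_le v' w
      have hge : cs.length (v * w) ≤ cs.length (v' * w) + 1 := by
        have h2 := cs.length_mul_le (cs.simple i) (v' * w)
        rw [cs.length_simple] at h2
        have h3 : v * w = cs.simple i * (v' * w) := by rw [← mul_assoc, ← hvdec]
        rw [h3]; omega
      omega
    have hqy : q * b₂ * y ∈ bn.C (v' * w) := IHn v' hlv' w hv'w _ hqb y hy
    have hfin : (b₁ * p) * (q * b₂ * y) ∈ bn.C (cs.simple i * (v' * w)) := by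
      apply bn.simple_mul_mem (cs.length (v' * w)) (v' * w) rfl i _ _ hbp _ hqy
      have : cs.simple i * (v' * w) = v * w := by rw [← mul_assoc, ← hvdec]
      rw [this, hlen, hv'w]
      omega
    have key : a * y = (b₁ * p) * (q * b₂ * y) := by rw [hadec]; group
    rw [key, hvdec, mul_assoc]
    exact hfin

lemma prod_unique : ∀ n : ℕ, ∀ w : W, cs.length w = n → ∀ v : W,
    cs.length (v * w) = cs.length v + cs.length w →
    ∀ a₁ ∈ bn.C v, ∀ a₂ ∈ bn.C v, ∀ y₁ ∈ bn.C w, ∀ y₂ ∈ bn.C w,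
    a₁ * y₁ = a₂ * y₂ → a₁⁻¹ * a₂ ∈ bn.B := by
  intro n
  induction n with
  | zero =>
    intro w hw v hlen a₁ ha₁ a₂ ha₂ y₁ hy₁ y₂ hy₂ he
    have hw1 : w = 1 := cs.length_eq_zero_iff.mp hw
    subst hw1
    rw [bn.cell_one] at hy₁ hy₂
    have h2 : a₁⁻¹ * a₂ = y₁ * y₂⁻¹ := by
      have h3 : a₂ = a₁ * y₁ * y₂⁻¹ := by rw [he]; group
      rw [h3]; group
    rw [h2]
    exact mul_mem hy₁ (inv_mem hy₂)
  | succ n IHn =>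
    intro w hw v hlen a₁ ha₁ a₂ ha₂ y₁ hy₁ y₂ hy₂ he
    have hwne : w ≠ 1 := by
      intro e; rw [e, cs.length_one] at hw; omega
    obtain ⟨t, ht⟩ := cs.exists_leftDescent_of_ne_one hwne
    have hdl : cs.length (cs.simple t * w) + 1 = cs.length w := cs.isLeftDescent_iff.mp ht
    obtain ⟨w'', hw''def⟩ : ∃ x, x = cs.simple t * w := ⟨_, rfl⟩
    have hwdec : w = cs.simple t * w'' := by
      rw [hw''def, ← mul_assoc, cs.simple_mul_simple_self, one_mul]
    have hlw'' : cs.length w'' = n := by rw [hw''def]; omega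
    have hsw'' : cs.length (cs.simple t * w'') = n + 1 := by rw [← hwdec, hw]
    -- ℓ(v * s t) = ℓ v + 1
    have hvt : cs.length (v * cs.simple t) = cs.length v + 1 := by
      have hle := cs.length_mul_le v (cs.simple t)
      rw [cs.length_simple] at hle
      have hge : cs.length (v * w) ≤ cs.length (v * cs.simple t) + cs.length w'' := by
        calc cs.length (v * w) = cs.length ((v * cs.simple t) * w'') := by
              rw [mul_assoc, ← hwdec]
          _ ≤ cs.length (v * cs.simple t) + cs.length w'' := cs.length_mul_le _ _
      omega
    -- decompose y₁, y₂
    obtain ⟨p, hp⟩ := bn.cell_nonempty (cs.simple t)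
    obtain ⟨q, hq⟩ := bn.cell_nonempty w''
    have hpq : p * q ∈ bn.C w := by
      rw [hwdec]
      exact bn.simple_mul_mem n w'' hlw'' t hsw'' p hp q hq
    obtain ⟨b₁, hb₁, b₂, hb₂, hy₁dec⟩ := bn.single_coset w (p * q) y₁ hpq hy₁
    obtain ⟨d₁, hd₁, d₂, hd₂, hy₂dec⟩ := bn.single_coset w (p * q) y₂ hpq hy₂
    obtain ⟨c₁, hc₁, z₁, hz₁, hy₁'⟩ : ∃ c ∈ bn.C (cs.simple t), ∃ z ∈ bn.C w'', y₁ = c * z := by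
      refine ⟨b₁ * p, ?_, q * b₂, ?_, by rw [hy₁dec]; group⟩
      · have := bn.mem_mul_mem (cs.simple t) p b₁ 1 hp hb₁ (one_mem _)
        rwa [mul_one] at this
      · have := bn.mem_mul_mem w'' q 1 b₂ hq (one_mem _) hb₂
        rwa [one_mul] at this
    obtain ⟨c₂, hc₂, z₂, hz₂, hy₂'⟩ : ∃ c ∈ bn.C (cs.simple t), ∃ z ∈ bn.C w'', y₂ = c * z := by
      refine ⟨d₁ * p, ?_, q * d₂, ?_, by rw [hy₂dec]; group⟩
      · have := bn.mem_mul_mem (cs.simple t) p d₁ 1 hp hd₁ (one_mem _)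
        rwa [mul_one] at this
      · have := bn.mem_mul_mem w'' q 1 d₂ hq (one_mem _) hd₂
        rwa [one_mul] at this
    -- a_i * c_i ∈ C (v * s t)
    have hac₁ : a₁ * c₁ ∈ bn.C (v * cs.simple t) := by
      apply bn.mul_mem_cell (cs.length v) v rfl (cs.simple t) _ a₁ ha₁ c₁ hc₁
      rw [hvt, cs.length_simple]
    have hac₂ : a₂ * c₂ ∈ bn.C (v * cs.simple t) := by
      apply bn.mul_mem_cell (cs.length v) v rfl (cs.simple t) _ a₂ ha₂ c₂ hc₂
      rw [hvt, cs.length_simple]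
    -- apply IH
    have hlen'' : cs.length ((v * cs.simple t) * w'') =
        cs.length (v * cs.simple t) + cs.length w'' := by
      rw [mul_assoc, ← hwdec, hlen, hvt, hlw'', hw]
      omega
    have hprod : (a₁ * c₁) * z₁ = (a₂ * c₂) * z₂ := by
      have : a₁ * y₁ = a₂ * y₂ := he
      rw [hy₁', hy₂'] at this
      rw [mul_assoc, mul_assoc]
      exact this
    have hB := IHn w'' hlw'' (v * cs.simple t) hlen'' _ hac₁ _ hac₂ _ hz₁ _ hz₂ hprod
    -- (a₁ c₁)⁻¹ (a₂ c₂) = c₁⁻¹ (a₁⁻¹ a₂) c₂ ∈ B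
    obtain ⟨b, hb, hbe⟩ : ∃ b ∈ bn.B, a₁⁻¹ * a₂ = c₁ * b * c₂⁻¹ := by
      refine ⟨(a₁ * c₁)⁻¹ * (a₂ * c₂), hB, ?_⟩
      group
    have hc₁b : c₁ * b ∈ bn.C (cs.simple t) := by
      have := bn.mem_mul_mem (cs.simple t) c₁ 1 b hc₁ (one_mem _) hb
      rwa [one_mul] at this
    have hx : a₁⁻¹ * a₂ ∈ bn.C (cs.simple t * cs.simple t) ∨ a₁⁻¹ * a₂ ∈ bn.C (cs.simple t) := by
      rw [hbe]
      exact bn.T3_left t hc₁b (bn.inv_mem_cell_simple hc₂)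
    rw [cs.simple_mul_simple_self, bn.cell_one] at hx
    rcases hx with hx | hx
    · exact hx
    · exfalso
      have ha₂' : a₂ ∈ bn.C (v * cs.simple t) := by
        have : a₂ = a₁ * (a₁⁻¹ * a₂) := by group
        rw [this]
        apply bn.mul_mem_cell (cs.length v) v rfl (cs.simple t) _ a₁ ha₁ _ hx
        rw [hvt, cs.length_simple]
      have heq := bn.cell_eq_of_mem ha₂ ha₂'
      have h3 := congrArg cs.length heq
      rw [hvt] at h3
      omega

lemma rel_iff {u : W} {g h : G} :
    bn.Rel u (QuotientGroup.mk g) (QuotientGroup.mk h) ↔ g⁻¹ * h ∈ bn.C u := by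
  constructor
  · rintro ⟨g₀, h₀, e₁, e₂, hm⟩
    have hb₁ : g⁻¹ * g₀ ∈ bn.B := QuotientGroup.eq.mp e₁
    have hb₂ : h₀⁻¹ * h ∈ bn.B := QuotientGroup.eq.mp e₂.symm
    have key : g⁻¹ * h = (g⁻¹ * g₀) * (g₀⁻¹ * h₀) * (h₀⁻¹ * h) := by group
    rw [key]
    exact bn.mem_mul_mem u (g₀⁻¹ * h₀) (g⁻¹ * g₀) (h₀⁻¹ * h) hm hb₁ hb₂
  · intro hm
    exact ⟨g, h, rfl, rfl, hm⟩

end BNPair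

/-- Unique intermediate flag: in a group with a BN-pair, if `F →ᵛʷ F''` with
`ℓ(vw) = ℓ(v) + ℓ(w)`, then there is a unique flag `F'` with `F →ᵛ F' →ʷ F''`. -/
theorem BNPair.existsUnique_intermediate_flag {G ι W : Type*} [Group G] [Group W]
    {M : CoxeterMatrix ι} {cs : CoxeterSystem M W} (bn : BNPair G cs)
    (v w : W) (F F'' : G ⧸ bn.B)
    (h : bn.Rel (v * w) F F'')
    (hlen : cs.length (v * w) = cs.length v + cs.length w) :
    ∃! F' : G ⧸ bn.B, bn.Rel v F F' ∧ bn.Rel w F' F'' := by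
  obtain ⟨g, g'', hF, hF'', hm⟩ := h
  subst hF; subst hF''
  obtain ⟨a, ha⟩ := bn.cell_nonempty v
  obtain ⟨y, hy⟩ := bn.cell_nonempty w
  have hay : a * y ∈ bn.C (v * w) := bn.mul_mem_cell (cs.length v) v rfl w hlen a ha y hy
  obtain ⟨b₁, hb₁, b₂, hb₂, hdec⟩ := bn.single_coset (v * w) (a * y) (g⁻¹ * g'') hay hm
  refine ⟨QuotientGroup.mk (g * (b₁ * a)), ⟨?_, ?_⟩, ?_⟩
  · rw [bn.rel_iff]
    have e : g⁻¹ * (g * (b₁ * a)) = b₁ * a := by group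
    rw [e]
    have := bn.mem_mul_mem v a b₁ 1 ha hb₁ (one_mem _)
    rwa [mul_one] at this
  · rw [bn.rel_iff]
    have e : (g * (b₁ * a))⁻¹ * g'' = a⁻¹ * b₁⁻¹ * (g⁻¹ * g'') := by group
    rw [e, hdec]
    have e2 : a⁻¹ * b₁⁻¹ * (b₁ * (a * y) * b₂) = y * b₂ := by group
    rw [e2]
    have := bn.mem_mul_mem w y 1 b₂ hy (one_mem _) hb₂
    rwa [one_mul] at this
  · rintro F₀ ⟨h1, h2⟩
    obtain ⟨k, rfl⟩ := QuotientGroup.mk_surjective F₀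
    rw [bn.rel_iff] at h1 h2
    have ha₁ : g⁻¹ * (g * (b₁ * a)) ∈ bn.C v := by
      have e : g⁻¹ * (g * (b₁ * a)) = b₁ * a := by group
      rw [e]
      have := bn.mem_mul_mem v a b₁ 1 ha hb₁ (one_mem _)
      rwa [mul_one] at this
    have hy₁ : (g * (b₁ * a))⁻¹ * g'' ∈ bn.C w := by
      have e : (g * (b₁ * a))⁻¹ * g'' = a⁻¹ * b₁⁻¹ * (g⁻¹ * g'') := by group
      rw [e, hdec]
      have e2 : a⁻¹ * b₁⁻¹ * (b₁ * (a * y) * b₂) = y * b₂ := by group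
      rw [e2]
      have := bn.mem_mul_mem w y 1 b₂ hy (one_mem _) hb₂
      rwa [one_mul] at this
    have hprod : (g⁻¹ * (g * (b₁ * a))) * ((g * (b₁ * a))⁻¹ * g'') = (g⁻¹ * k) * (k⁻¹ * g'') := by
      group
    have hB := bn.prod_unique (cs.length w) w rfl v hlen _ ha₁ _ h1 _ hy₁ _ h2 hprod
    have hB' : (g * (b₁ * a))⁻¹ * k ∈ bn.B := by
      have e : (g⁻¹ * (g * (b₁ * a)))⁻¹ * (g⁻¹ * k) = (g * (b₁ * a))⁻¹ * k := by group
      rwa [e] at hB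
    exact (QuotientGroup.eq.mpr hB').symm
end
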